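/- In the two-player sensing game, assume additionally l > a and α < (β* − γ*)/(1 − β*γ*), and let D = (1−α)a − l + a − (1−α)φ and y* = ((1−α)a − l)/D. Then at the completely mixed equilibrium where each player plays NS with probability y*, the expected utility of player i equals (R_i g_i/σ²)·Δ, where Δ = ((1−α)·a² − (1−α)·l·φ)/D; concretely, a·y* + l·(1−y*) = (1−α)·(φ·y* + a·(1−y*)) = Δ. -/

import Mathlib

inductive SenseAction
  | S
  | NS
  deriving DecidableEq

open SenseAction

set_option maxHeartbeats 1000000 in
/-- assuming l > a and α < (β*−γ*)/(1−β*γ*), at the completely mixed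
equilibrium where each player plays NS with probability y* = ((1−α)a − l)/D,
D = (1−α)a − l + a − (1−α)φ, the expected utility of player i is (R_i g_i/σ²)·Δ with
Δ = ((1−α)a² − (1−α)lφ)/D; concretely a·y* + l·(1−y*) = (1−α)(φ·y* + a·(1−y*)) = Δ. -/
theorem stmt7
    (β γ α R1 R2 g1 g2 σ2 b c : ℝ)
    (hβ0 : 0 < β) (hβ1 : β < 1) (hγ : 0 < γ) (hγβ : γ * β < 1)
    (hα0 : 0 < α) (hα1 : α < 1)
    (hR1 : 0 < R1) (hR2 : 0 < R2) (hg1 : 0 < g1) (hg2 : 0 < g2)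
    (hσ : 0 < σ2) (hb : 0 < b) (hc : 0 < c)
    (w1 w2 a l φ : ℝ)
    (hw1 : w1 = R1 * g1 / σ2) (hw2 : w2 = R2 * g2 / σ2)
    (ha : a = b * (1 - β) / β)
    (hl : l = c * (1 - γ * β) / (γ * (1 + β)))
    (hφ : φ = b * (1 - γ * β) / (β * (1 + γ)))
    (U1 U2 : SenseAction → SenseAction → ℝ)
    (hU1nn : U1 NS NS = w1 * a) (hU1ns : U1 NS S = w1 * l)
    (hU1sn : U1 S NS = w1 * ((1 - α) * φ)) (hU1ss : U1 S S = w1 * ((1 - α) * a))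
    (hU2nn : U2 NS NS = w2 * a) (hU2ns : U2 NS S = w2 * ((1 - α) * φ))
    (hU2sn : U2 S NS = w2 * l) (hU2ss : U2 S S = w2 * ((1 - α) * a))
    (hla : l > a)
    (EU1 EU2 : ℝ → ℝ → ℝ)
    (hEU1 : ∀ x y, EU1 x y = x * (y * U1 NS NS + (1 - y) * U1 NS S)
        + (1 - x) * (y * U1 S NS + (1 - y) * U1 S S))
    (hEU2 : ∀ x y, EU2 x y = y * (x * U2 NS NS + (1 - x) * U2 S NS)
        + (1 - y) * (x * U2 NS S + (1 - x) * U2 S S))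
    (mixedNE : ℝ → ℝ → Prop)
    (hmixedNE : ∀ x y, mixedNE x y ↔
      ((∀ x', 0 ≤ x' → x' ≤ 1 → EU1 x' y ≤ EU1 x y) ∧
       (∀ y', 0 ≤ y' → y' ≤ 1 → EU2 x y' ≤ EU2 x y)))
    (hα : α < (β - γ) / (1 - β * γ))
    (D ystar Δ : ℝ)
    (hD : D = (1 - α) * a - l + a - (1 - α) * φ)
    (hy : ystar = ((1 - α) * a - l) / D)
    (hΔ : Δ = ((1 - α) * a ^ 2 - (1 - α) * l * φ) / D) :
    a * ystar + l * (1 - ystar) = Δ ∧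
    (1 - α) * (φ * ystar + a * (1 - ystar)) = Δ ∧
    EU1 ystar ystar = R1 * g1 / σ2 * Δ ∧
    EU2 ystar ystar = R2 * g2 / σ2 * Δ := by
  have hβγ : 0 < 1 - β * γ := by nlinarith
  have ha0 : 0 < a := by
    rw [ha]
    have h1 : 0 < b * (1 - β) := by nlinarith
    exact div_pos h1 hβ0
  have hαβγ : α * (1 - β * γ) < β - γ := (lt_div_iff₀ hβγ).mp hα
  have hφa : a < (1 - α) * φ := by
    have hkey : (1 - β) * (1 + γ) < (1 - α) * (1 - γ * β) := by
      have h := hαβγ; ring_nf at h ⊢; linarith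
    rw [ha, hφ]
    rw [div_lt_iff₀ hβ0, mul_comm]
    have h1γ : 0 < 1 + γ := by linarith
    have heq : (1 - α) * (b * (1 - γ * β) / (β * (1 + γ))) * β
        = b * ((1 - α) * (1 - γ * β)) / (1 + γ) := by
      field_simp
    rw [heq, lt_div_iff₀ h1γ]
    nlinarith
  have hla' : (1 - α) * a - l < 0 := by nlinarith
  have hD0 : D < 0 := by rw [hD]; nlinarith
  have hDne : D ≠ 0 := ne_of_lt hD0
  subst hD hy hΔ
  have h1 : a * (((1 - α) * a - l) / ((1 - α) * a - l + a - (1 - α) * φ))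
      + l * (1 - ((1 - α) * a - l) / ((1 - α) * a - l + a - (1 - α) * φ))
      = ((1 - α) * a ^ 2 - (1 - α) * l * φ) / ((1 - α) * a - l + a - (1 - α) * φ) := by
    rw [eq_div_iff hDne]
    have hyD : ((1 - α) * a - l) / ((1 - α) * a - l + a - (1 - α) * φ) * ((1 - α) * a - l + a - (1 - α) * φ) = (1 - α) * a - l := div_mul_cancel₀ _ hDne
    linear_combination (a - l) * hyD
  have h2 : (1 - α) * (φ * (((1 - α) * a - l) / ((1 - α) * a - l + a - (1 - α) * φ))
      + a * (1 - ((1 - α) * a - l) / ((1 - α) * a - l + a - (1 - α) * φ)))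
      = ((1 - α) * a ^ 2 - (1 - α) * l * φ) / ((1 - α) * a - l + a - (1 - α) * φ) := by
    field_simp
    ring
  refine ⟨h1, h2, ?_, ?_⟩
  · rw [hEU1, hU1nn, hU1ns, hU1sn, hU1ss, hw1]
    set y := ((1 - α) * a - l) / ((1 - α) * a - l + a - (1 - α) * φ)
    have e1 : y * (R1 * g1 / σ2 * a) + (1 - y) * (R1 * g1 / σ2 * l)
        = R1 * g1 / σ2 * (a * y + l * (1 - y)) := by ring
    have e2 : y * (R1 * g1 / σ2 * ((1 - α) * φ)) + (1 - y) * (R1 * g1 / σ2 * ((1 - α) * a))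
        = R1 * g1 / σ2 * ((1 - α) * (φ * y + a * (1 - y))) := by ring
    rw [e1, e2, h1, h2]; ring
  · rw [hEU2, hU2nn, hU2ns, hU2sn, hU2ss, hw2]
    set y := ((1 - α) * a - l) / ((1 - α) * a - l + a - (1 - α) * φ)
    have e1 : y * (R2 * g2 / σ2 * a) + (1 - y) * (R2 * g2 / σ2 * l)
        = R2 * g2 / σ2 * (a * y + l * (1 - y)) := by ring
    have e2 : y * (R2 * g2 / σ2 * ((1 - α) * φ)) + (1 - y) * (R2 * g2 / σ2 * ((1 - α) * a))
        = R2 * g2 / σ2 * ((1 - α) * (φ * y + a * (1 - y))) := by ring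
    rw [e1, e2, h1, h2]; ring
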